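/- (Symmetries map solutions to solutions) Let σ be a structural symmetry of a FOND task that additionally fixes the initial state (σ(s₀) = s₀). If π is a solution policy, then the policy σ(π) defined by σ(π)[σ(s)] = σ(π[s]) for s ∈ domain(π) is also a solution policy, with domain(σ(π)) = {σ(s) : s ∈ domain(π)} and front(σ(π)) = {σ(s) : s ∈ front(π)}. -/

import Mathlib

/-- The domain of a policy (partial function from states to actions). -/
def pdom {S A : Type*} (π : S → Option A) : Set S := {s | π s ≠ none}

/-- One π-transition step: from `s` take the action `π s` prescribes, landing in a successor. -/
def pstep {S A : Type*} (succs : S → A → Set S) (π : S → Option A) (s s' : S) : Prop :=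
  ∃ a, π s = some a ∧ s' ∈ succs s a

/-- `reachFrom succs π s` : states reachable from `s` by π-trajectories (including `s`). -/
def reachFrom {S A : Type*} (succs : S → A → Set S) (π : S → Option A) (s : S) : Set S :=
  {s' | Relation.ReflTransGen (pstep succs π) s s'}

/-- `reachAll succs π` : states reachable from some domain state of `π`. -/
def reachAll {S A : Type*} (succs : S → A → Set S) (π : S → Option A) : Set S :=
  ⋃ s ∈ pdom π, reachFrom succs π s

/-- Frontier of a policy: reachable but unmapped states. -/
def front {S A : Type*} (succs : S → A → Set S) (π : S → Option A) : Set S :=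
  reachAll succs π \ pdom π

/-- `escape succs π s` : frontier states π-reachable from `s`. -/
def escape {S A : Type*} (succs : S → A → Set S) (π : S → Option A) (s : S) : Set S :=
  reachFrom succs π s ∩ front succs π

/-- A policy is proper iff every domain state reaches a frontier state. -/
def proper {S A : Type*} (succs : S → A → Set S) (π : S → Option A) : Prop :=
  ∀ s ∈ pdom π, (escape succs π s).Nonempty

/-- `π'` is a sub-policy of `π` : restriction of `π` to a subset of its domain. -/
def subpolicy {S A : Type*} (π' π : S → Option A) : Prop :=
  ∀ s a, π' s = some a → π s = some a

/-- Goal-closed: every frontier state is a goal state. -/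
def goalClosed {S A : Type*} (succs : S → A → Set S) (Sg : Set S) (π : S → Option A) : Prop :=
  front succs π ⊆ Sg

/-- `remain(π) = (front(π) \ S*) ∪ ({s₀} \ (S* ∪ domain(π)))`. -/
def remainSet {S A : Type*} (succs : S → A → Set S) (Sg : Set S) (s0 : S)
    (π : S → Option A) : Set S :=
  (front succs π \ Sg) ∪ ({s0} \ (Sg ∪ pdom π))

/-- A solution: a strong-cyclic (goal-closed and proper) policy covering the initial state. -/
def isSolution {S A : Type*} (succs : S → A → Set S) (Sg : Set S) (s0 : S)
    (π : S → Option A) : Prop :=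
  goalClosed succs Sg π ∧ proper succs π ∧ s0 ∈ Sg ∪ pdom π

/-- Symmetries map solutions to solutions: if `σ = (σS, σA)` preserves goal states,
applicability, and successor structure, and fixes the initial state, then the image
`σ(π)` (defined by `σ(π)[σ(s)] = σ(π[s])`) of a solution policy `π` is again a solution,
with domain and frontier the `σ`-images of those of `π`. -/
theorem symmetry_maps_solution_to_solution {S A : Type*}
    (succs : S → A → Set S) (app : S → A → Prop) (Sg : Set S) (s0 : S)
    (σS : Equiv.Perm S) (σA : Equiv.Perm A)
    (hgoal : ∀ s, σS s ∈ Sg ↔ s ∈ Sg)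
    (happ : ∀ s a, app (σS s) (σA a) ↔ app s a)
    (hsuccs : ∀ s a, succs (σS s) (σA a) = σS '' succs s a)
    (hinit : σS s0 = s0)
    (π : S → Option A) (hπapp : ∀ s a, π s = some a → app s a)
    (hπ : isSolution succs Sg s0 π) :
    (∀ s a, (Option.map σA (π (σS.symm s))) = some a → app s a) ∧
    isSolution succs Sg s0 (fun s => Option.map σA (π (σS.symm s))) ∧
    pdom (fun s => Option.map σA (π (σS.symm s))) = σS '' pdom π ∧
    front succs (fun s => Option.map σA (π (σS.symm s))) = σS '' front succs π := by

  obtain ⟨hgc, hprop, hs0⟩ := hπ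
  set π' : S → Option A := fun s => Option.map σA (π (σS.symm s)) with hπ'def
  have hstep : ∀ s t, pstep succs π' s t ↔ pstep succs π (σS.symm s) (σS.symm t) := by
    intro s t
    constructor
    · rintro ⟨a, ha, ht⟩
      simp only [hπ'def, Option.map_eq_some_iff] at ha
      obtain ⟨b, hb, rfl⟩ := ha
      refine ⟨b, hb, ?_⟩
      have hs := hsuccs (σS.symm s) b
      rw [Equiv.apply_symm_apply] at hs
      rw [hs] at ht
      obtain ⟨u, hu, hut⟩ := ht
      rw [← hut]; simpa using hu
    · rintro ⟨a, ha, ht⟩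
      refine ⟨σA a, by simp [hπ'def, ha], ?_⟩
      have hs := hsuccs (σS.symm s) a
      rw [Equiv.apply_symm_apply] at hs
      rw [hs]
      exact ⟨σS.symm t, ht, by simp⟩
  have hreach : ∀ s t, Relation.ReflTransGen (pstep succs π') s t ↔
      Relation.ReflTransGen (pstep succs π) (σS.symm s) (σS.symm t) := by
    intro s t
    constructor
    · intro h
      induction h with
      | refl => exact .refl
      | tail _ hst ih => exact ih.tail ((hstep _ _).1 hst)
    · intro h
      have key : ∀ u v, Relation.ReflTransGen (pstep succs π) u v →
          Relation.ReflTransGen (pstep succs π') (σS u) (σS v) := by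
        intro u v h
        induction h with
        | refl => exact .refl
        | tail _ hst ih =>
          exact ih.tail ((hstep _ _).2 (by simpa using hst))
      have := key _ _ h
      simpa using this
  have hdom : ∀ s, s ∈ pdom π' ↔ σS.symm s ∈ pdom π := by
    intro s
    simp [pdom, hπ'def]
  have hdomimg : pdom π' = σS '' pdom π := by
    ext s
    rw [hdom]
    constructor
    · intro h; exact ⟨σS.symm s, h, by simp⟩
    · rintro ⟨u, hu, rfl⟩; simpa using hu
  have hreachAll : ∀ s, s ∈ reachAll succs π' ↔ σS.symm s ∈ reachAll succs π := by
    intro s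
    simp only [reachAll, Set.mem_iUnion, reachFrom, Set.mem_setOf_eq]
    constructor
    · rintro ⟨u, hu, h⟩
      exact ⟨σS.symm u, (hdom u).1 hu, (hreach u s).1 h⟩
    · rintro ⟨u, hu, h⟩
      refine ⟨σS u, (hdom _).2 (by simpa using hu), (hreach _ _).2 (by simpa using h)⟩
  have hfront : ∀ s, s ∈ front succs π' ↔ σS.symm s ∈ front succs π := by
    intro s
    simp only [front, Set.mem_diff, hreachAll, hdom]
  have hfrontimg : front succs π' = σS '' front succs π := by
    ext s
    rw [hfront]
    constructor
    · intro h; exact ⟨σS.symm s, h, by simp⟩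
    · rintro ⟨u, hu, rfl⟩; simpa using hu
  refine ⟨?_, ⟨?_, ?_, ?_⟩, hdomimg, hfrontimg⟩
  · intro s a ha
    simp only [Option.map_eq_some_iff] at ha
    obtain ⟨b, hb, rfl⟩ := ha
    have := hπapp _ _ hb
    have h2 := (happ (σS.symm s) b).2 this
    simpa using h2
  · intro s hs
    have := hgc ((hfront s).1 hs)
    have h2 := (hgoal (σS.symm s)).2 this
    simpa using h2
  · intro s hs
    obtain ⟨t, ht1, ht2⟩ := hprop (σS.symm s) ((hdom s).1 hs)
    refine ⟨σS t, ?_, ?_⟩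
    · exact (hreach s (σS t)).2 (by simpa [reachFrom] using ht1)
    · exact (hfront (σS t)).2 (by simpa using ht2)
  · rcases hs0 with h | h
    · exact Or.inl h
    · refine Or.inr ((hdom s0).2 ?_)
      have : σS.symm s0 = s0 := by
        rw [Equiv.symm_apply_eq, hinit]
      rw [this]; exact h
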